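/- Let H be a separable Hilbert space, A a bounded self-adjoint operator on H, and {j_α}_{α∈S} a countable family of bounded self-adjoint operators with ∑_α j_α² = 1 (convergence in the weak operator topology). Then for every φ ∈ H, ∑_α ‖A j_α φ‖² ≤ 2‖Aφ‖² + ⟨φ, Cφ⟩, where C = 2 ∑_α (−[A, j_α]²). -/
import Mathlib


open scoped InnerProductSpace

/-- **Localization estimate** (Last–Simon, Proposition 2.1).  Let `H` be a separable Hilbert
space, `A` a bounded self-adjoint operator, and `{j α}` a countable family of bounded
self-adjoint operators forming a partition of unity, `∑ α, (j α)² = 1`, weakly.  Let `C` be the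
(bounded) operator with quadratic form `⟨φ, C φ⟩ = 2 ∑ α ⟨φ, (-[A, j α]²) φ⟩`.  Then for every
`φ`, `∑ α ‖A (j α φ)‖² ≤ 2‖Aφ‖² + ⟨φ, Cφ⟩`. -/
theorem stmt0 {H : Type*} [NormedAddCommGroup H] [InnerProductSpace ℂ H] [CompleteSpace H]
    [TopologicalSpace.SeparableSpace H] {S : Type*} [Countable S]
    (A : H →L[ℂ] H) (hA : IsSelfAdjoint A)
    (j : S → H →L[ℂ] H) (hj : ∀ α, IsSelfAdjoint (j α))
    (hpart : ∀ x y : H, HasSum (fun α => ⟪x, ((j α) * (j α)) y⟫_ℂ) ⟪x, y⟫_ℂ)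
    (C : H →L[ℂ] H)
    (hC : ∀ x : H,
      HasSum (fun α => (2 : ℂ) * ⟪x, (-((A * j α - j α * A) * (A * j α - j α * A))) x⟫_ℂ)
        ⟪x, C x⟫_ℂ)
    (φ : H) :
    ∑' α, ‖A ((j α) φ)‖ ^ 2 ≤ 2 * ‖A φ‖ ^ 2 + (⟪φ, C φ⟫_ℂ).re := by
  set B : S → H →L[ℂ] H := fun α => A * j α - j α * A with hBdef
  have hBadj : ∀ α, ContinuousLinearMap.adjoint (B α) = -(B α) := by
    intro α
    rw [← ContinuousLinearMap.star_eq_adjoint]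
    simp only [hBdef, star_sub, star_mul, hA.star_eq, (hj α).star_eq]
    abel
  -- first sum : ∑ ‖j α (A φ)‖² = ‖A φ‖²
  have h1c : HasSum (fun α => ((‖(j α) (A φ)‖ ^ 2 : ℝ) : ℂ)) ((‖A φ‖ ^ 2 : ℝ) : ℂ) := by
    have := hpart (A φ) (A φ)
    have heq : ∀ α, ⟪A φ, ((j α) * (j α)) (A φ)⟫_ℂ = ((‖(j α) (A φ)‖ ^ 2 : ℝ) : ℂ) := by
      intro α
      rw [ContinuousLinearMap.mul_apply, ← ContinuousLinearMap.adjoint_inner_left,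
        (hj α).adjoint_eq]
      simp [inner_self_eq_norm_sq_to_K]
    rw [inner_self_eq_norm_sq_to_K] at this
    simp only [heq] at this
    convert this using 2
    norm_cast
  have h1 : HasSum (fun α => ‖(j α) (A φ)‖ ^ 2) (‖A φ‖ ^ 2) := by
    have := h1c.mapL Complex.reCLM
    simpa [← Complex.ofReal_pow] using this
  -- second sum : ∑ 2‖B α φ‖² = re ⟪φ, C φ⟫
  have h2c : HasSum (fun α => (((2 : ℝ) * ‖(B α) φ‖ ^ 2 : ℝ) : ℂ)) ⟪φ, C φ⟫_ℂ := by
    have := hC φ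
    have heq : ∀ α, (2 : ℂ) * ⟪φ, (-((A * j α - j α * A) * (A * j α - j α * A))) φ⟫_ℂ
        = (((2 : ℝ) * ‖(B α) φ‖ ^ 2 : ℝ) : ℂ) := by
      intro α
      have : ⟪φ, (-((B α) * (B α))) φ⟫_ℂ = ((‖(B α) φ‖ ^ 2 : ℝ) : ℂ) := by
        rw [ContinuousLinearMap.neg_apply, inner_neg_right, ContinuousLinearMap.mul_apply,
          ← ContinuousLinearMap.adjoint_inner_left, hBadj α]
        simp [inner_self_eq_norm_sq_to_K]
      rw [show A * j α - j α * A = B α from rfl, this]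
      push_cast
      ring
    simpa only [heq] using this
  have h2 : HasSum (fun α => (2 : ℝ) * ‖(B α) φ‖ ^ 2) (⟪φ, C φ⟫_ℂ).re := by
    have := h2c.mapL Complex.reCLM
    simpa [← Complex.ofReal_pow] using this
  -- combined majorant
  have hg : HasSum (fun α => 2 * ‖(j α) (A φ)‖ ^ 2 + 2 * ‖(B α) φ‖ ^ 2)
      (2 * ‖A φ‖ ^ 2 + (⟪φ, C φ⟫_ℂ).re) := (h1.mul_left 2).add h2
  -- pointwise bound
  have hpt : ∀ α, ‖A ((j α) φ)‖ ^ 2 ≤ 2 * ‖(j α) (A φ)‖ ^ 2 + 2 * ‖(B α) φ‖ ^ 2 := by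
    intro α
    have hsplit : A ((j α) φ) = (j α) (A φ) + (B α) φ := by
      simp [hBdef, ContinuousLinearMap.sub_apply, ContinuousLinearMap.mul_apply]
    rw [hsplit]
    nlinarith [norm_add_le ((j α) (A φ)) ((B α) φ), norm_nonneg ((j α) (A φ)),
      norm_nonneg ((B α) φ), norm_nonneg ((j α) (A φ) + (B α) φ),
      sq_nonneg (‖(j α) (A φ)‖ - ‖(B α) φ‖)]
  have hf : Summable (fun α => ‖A ((j α) φ)‖ ^ 2) :=
    Summable.of_nonneg_of_le (fun α => sq_nonneg _) hpt hg.summable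
  calc ∑' α, ‖A ((j α) φ)‖ ^ 2
      ≤ ∑' α, (2 * ‖(j α) (A φ)‖ ^ 2 + 2 * ‖(B α) φ‖ ^ 2) :=
        Summable.tsum_le_tsum hpt hf hg.summable
    _ = 2 * ‖A φ‖ ^ 2 + (⟪φ, C φ⟫_ℂ).re := hg.tsum_eq
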